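/- Let (X,d) be a geodesic metric space with base point p, ε > 0, and M > 0. Then there exists a constant C = exp(2εM) such that for every pair of points x, y ∈ X with d(x,y) ≤ M, the ρ_ε-length of any geodesic [x,y] from x to y satisfies l_{d_ε}([x,y]) ≤ C · d_ε(x,y), where d_ε(x,y) is the infimum of ρ_ε-lengths over all rectifiable curves from x to y. -/
import Mathlib


noncomputable section

variable {X : Type*} [MetricSpace X]

/-- `γ : [0,L] → X` is a `1`-Lipschitz (arc-length) parametrization. -/
def IsArcParam (γ : ℝ → X) (L : ℝ) : Prop :=
  ∀ s ∈ Set.Icc (0:ℝ) L, ∀ t ∈ Set.Icc (0:ℝ) L, dist (γ s) (γ t) ≤ |s - t|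

/-- `γ` is a (unit-speed) geodesic from `x` to `y`. -/
def IsGeodesicFromTo (γ : ℝ → X) (x y : X) : Prop :=
  γ 0 = x ∧ γ (dist x y) = y ∧
    ∀ s ∈ Set.Icc (0:ℝ) (dist x y), ∀ t ∈ Set.Icc (0:ℝ) (dist x y),
      dist (γ s) (γ t) = |s - t|

/-- The `ρ_ε`-length of an arc-length parametrized curve `γ : [0,L] → X`,
where `ρ_ε = exp (-ε d(p,·))`. -/
def uniLength (p : X) (ε : ℝ) (γ : ℝ → X) (L : ℝ) : ℝ :=
  ∫ t in (0:ℝ)..L, Real.exp (-ε * dist p (γ t))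

/-- The uniformized distance `d_ε(x,y)`: infimum of `ρ_ε`-lengths over rectifiable
(arc-length parametrized) curves from `x` to `y`. -/
def uniDist (p : X) (ε : ℝ) (x y : X) : ℝ :=
  sInf {l | ∃ γ : ℝ → X, ∃ L : ℝ, 0 ≤ L ∧ IsArcParam γ L ∧ γ 0 = x ∧ γ L = y ∧
    l = uniLength p ε γ L}

private lemma arcParam_continuousOn {σ : ℝ → X} {L : ℝ} (h : IsArcParam σ L) :
    ContinuousOn σ (Set.Icc 0 L) := by
  have hl : LipschitzOnWith 1 σ (Set.Icc 0 L) := by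
    rw [lipschitzOnWith_iff_dist_le_mul]
    intro s hs t ht
    simpa [Real.dist_eq] using h s hs t ht
  exact hl.continuousOn

private lemma integrand_intervalIntegrable (p : X) (ε : ℝ) {σ : ℝ → X} {L : ℝ}
    (hL : 0 ≤ L) (h : IsArcParam σ L) :
    IntervalIntegrable (fun t => Real.exp (-ε * dist p (σ t)))
      MeasureTheory.volume 0 L := by
  apply ContinuousOn.intervalIntegrable
  rw [Set.uIcc_of_le hL]
  exact Real.continuous_exp.comp_continuousOn
    (continuousOn_const.mul
      ((continuous_const.dist continuous_id).comp_continuousOn (arcParam_continuousOn h)))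

/-- In a geodesic metric space, for points at distance at most `M`, the `ρ_ε`-length of any
geodesic between them is at most `exp (2 ε M)` times the uniformized distance. -/
theorem gehringHayman_local (p : X) (ε M : ℝ) (hε : 0 < ε) (hM : 0 < M)
    (hgeo : ∀ x y : X, ∃ γ : ℝ → X, IsGeodesicFromTo γ x y) :
    ∀ x y : X, dist x y ≤ M → ∀ γ : ℝ → X, IsGeodesicFromTo γ x y →
      uniLength p ε γ (dist x y) ≤ Real.exp (2 * ε * M) * uniDist p ε x y := by
  intro x y hxy γ hγ
  set d := dist x y with hd
  have hd0 : 0 ≤ d := dist_nonneg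
  set D := dist p x with hD
  -- the geodesic is an arc-length parametrization
  have hγarc : IsArcParam γ d := fun s hs t ht => (hγ.2.2 s hs t ht).le
  -- Upper bound for the geodesic length
  have hupper : uniLength p ε γ d ≤ d * Real.exp (ε * M - ε * D) := by
    have hmono : uniLength p ε γ d ≤ ∫ _t in (0:ℝ)..d, Real.exp (ε * M - ε * D) := by
      apply intervalIntegral.integral_mono_on hd0
        (integrand_intervalIntegrable p ε hd0 hγarc) intervalIntegrable_const
      intro t ht
      have h2 : dist (γ t) x = t := by
        have h3 := hγ.2.2 t ht 0 ⟨le_refl 0, hd0⟩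
        rw [hγ.1] at h3
        rw [h3, show |t - 0| = t by rw [sub_zero, abs_of_nonneg ht.1]]
      have h1 : D - t ≤ dist p (γ t) := by
        have := dist_triangle p (γ t) x
        rw [h2] at this; linarith
      have h4 : t ≤ M := le_trans ht.2 hxy
      apply Real.exp_le_exp.mpr
      nlinarith
    calc uniLength p ε γ d ≤ ∫ _t in (0:ℝ)..d, Real.exp (ε * M - ε * D) := hmono
      _ = d * Real.exp (ε * M - ε * D) := by simp
  -- Lower bound for any competitor curve
  have hlower : ∀ l ∈ {l | ∃ σ : ℝ → X, ∃ L : ℝ, 0 ≤ L ∧ IsArcParam σ L ∧ σ 0 = x ∧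
      σ L = y ∧ l = uniLength p ε σ L},
      d * Real.exp (-(ε * (M + D))) ≤ l := by
    rintro l ⟨σ, L, hL0, hσ, hσ0, hσL, rfl⟩
    have hdL : d ≤ L := by
      have := hσ 0 ⟨le_refl 0, hL0⟩ L ⟨hL0, le_refl L⟩
      rw [hσ0, hσL, abs_of_nonpos (by linarith)] at this
      linarith
    have hInt : IntervalIntegrable (fun t => Real.exp (-ε * dist p (σ t)))
        MeasureTheory.volume 0 L := integrand_intervalIntegrable p ε hL0 hσ
    have hInt1 : IntervalIntegrable (fun t => Real.exp (-ε * dist p (σ t)))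
        MeasureTheory.volume 0 d :=
      hInt.mono_set (by
        rw [Set.uIcc_of_le hd0, Set.uIcc_of_le hL0]
        exact Set.Icc_subset_Icc (le_refl 0) hdL)
    have hInt2 : IntervalIntegrable (fun t => Real.exp (-ε * dist p (σ t)))
        MeasureTheory.volume d L :=
      hInt.mono_set (by
        rw [Set.uIcc_of_le hdL, Set.uIcc_of_le hL0]
        exact Set.Icc_subset_Icc hd0 (le_refl L))
    have hsplit : uniLength p ε σ L =
        (∫ t in (0:ℝ)..d, Real.exp (-ε * dist p (σ t))) +
        (∫ t in d..L, Real.exp (-ε * dist p (σ t))) :=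
      (intervalIntegral.integral_add_adjacent_intervals hInt1 hInt2).symm
    have htail : 0 ≤ ∫ t in d..L, Real.exp (-ε * dist p (σ t)) :=
      intervalIntegral.integral_nonneg hdL (fun t _ => (Real.exp_pos _).le)
    have hhead : d * Real.exp (-(ε * (M + D))) ≤
        ∫ t in (0:ℝ)..d, Real.exp (-ε * dist p (σ t)) := by
      have hmono : (∫ _t in (0:ℝ)..d, Real.exp (-(ε * (M + D)))) ≤
          ∫ t in (0:ℝ)..d, Real.exp (-ε * dist p (σ t)) := by
        apply intervalIntegral.integral_mono_on hd0 intervalIntegrable_const hInt1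
        intro t ht
        have h2 : dist x (σ t) ≤ t := by
          have := hσ 0 ⟨le_refl 0, hL0⟩ t ⟨ht.1, le_trans ht.2 hdL⟩
          rw [hσ0, abs_of_nonpos (by linarith [ht.1])] at this
          linarith
        have h1 : dist p (σ t) ≤ D + t := by
          have := dist_triangle p x (σ t); linarith
        have h4 : t ≤ M := le_trans ht.2 hxy
        apply Real.exp_le_exp.mpr
        nlinarith
      calc d * Real.exp (-(ε * (M + D)))
          = ∫ _t in (0:ℝ)..d, Real.exp (-(ε * (M + D))) := by simp
        _ ≤ _ := hmono
    rw [hsplit]; linarith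
  -- the geodesic itself witnesses nonemptiness of the competitor set
  have hne : {l | ∃ σ : ℝ → X, ∃ L : ℝ, 0 ≤ L ∧ IsArcParam σ L ∧ σ 0 = x ∧
      σ L = y ∧ l = uniLength p ε σ L}.Nonempty :=
    ⟨uniLength p ε γ d, γ, d, hd0, hγarc, hγ.1, hγ.2.1, rfl⟩
  have hInf : d * Real.exp (-(ε * (M + D))) ≤ uniDist p ε x y :=
    le_csInf hne hlower
  -- combine
  have hkey : Real.exp (2 * ε * M) * (d * Real.exp (-(ε * (M + D)))) =
      d * Real.exp (ε * M - ε * D) := by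
    rw [mul_comm (Real.exp (2 * ε * M)), mul_assoc, ← Real.exp_add]
    ring_nf
  calc uniLength p ε γ d ≤ d * Real.exp (ε * M - ε * D) := hupper
    _ = Real.exp (2 * ε * M) * (d * Real.exp (-(ε * (M + D)))) := hkey.symm
    _ ≤ Real.exp (2 * ε * M) * uniDist p ε x y :=
      mul_le_mul_of_nonneg_left hInf (Real.exp_pos _).le

end
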